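/- arXiv:1306.6341 — 3 statements merged into one kernel-verified Lean document; each statement's English description precedes it below -/
import Mathlib

section
/- Charge-conservation independence of reference spinor: if Q₁,…,Q_N are numbers with ∑ᵢ Qᵢ = 0, then for any spinors q, r, t (with the relevant brackets nonzero), ∑ᵢ Qᵢ [r pᵢ]/([q r][q pᵢ]) = ∑ᵢ Qᵢ [t pᵢ]/([q t][q pᵢ]); i.e., the eikonal sum is independent of the reference spinor r. -/
noncomputable section
open BigOperators

/-- The antisymmetric spinor bracket [ab] = a₁b₂ − a₂b₁ on ℂ². -/
def sbr (a b : Fin 2 → ℂ) : ℂ := a 0 * b 1 - a 1 * b 0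

/-- Charge-conservation independence of the reference spinor in the eikonal sum:
if ∑ᵢ Qᵢ = 0 then ∑ᵢ Qᵢ [r pᵢ]/([q r][q pᵢ]) = ∑ᵢ Qᵢ [t pᵢ]/([q t][q pᵢ]). -/
theorem stmt_2 (N : ℕ) (Q : Fin N → ℂ) (p : Fin N → (Fin 2 → ℂ)) (q r t : Fin 2 → ℂ)
    (hQ : ∑ i, Q i = 0)
    (hqr : sbr q r ≠ 0) (hqt : sbr q t ≠ 0) (hqp : ∀ i, sbr q (p i) ≠ 0) :
    ∑ i, Q i * sbr r (p i) / (sbr q r * sbr q (p i)) =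
      ∑ i, Q i * sbr t (p i) / (sbr q t * sbr q (p i)) := by
  have key : ∀ i, Q i * sbr r (p i) / (sbr q r * sbr q (p i)) -
      Q i * sbr t (p i) / (sbr q t * sbr q (p i)) =
      Q i * (sbr r t / (sbr q r * sbr q t)) := by
    intro i
    have hp := hqp i
    field_simp
    simp only [sbr]
    ring
  rw [← sub_eq_zero, ← Finset.sum_sub_distrib]
  simp_rw [key]
  rw [← Finset.sum_mul, hQ, zero_mul]
end
end

section
/- Eikonal identity: for a four-vector n and four-vectors k₁,…,k_ℓ with all relevant denominators nonzero, the sum over all permutations σ of {1,…,ℓ} of ∏_{i=1}^{ℓ} (n·ε_{σ(i)}) / (n·(k_{σ(1)}+⋯+k_{σ(i)})) equals ∏_{i=1}^{ℓ} (n·ε_i)/(n·k_i). -/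
noncomputable section
open BigOperators

lemma sum_Iic_rev {n : ℕ} (i : Fin n) (f : Fin n → ℂ) :
    ∑ j ∈ Finset.Iic i.rev, f j.rev = ∑ j ∈ Finset.Ici i, f j := by
  apply Finset.sum_nbij' (i := Fin.rev) (j := Fin.rev)
  · intro j hj
    simp only [Finset.mem_Iic] at hj
    simp only [Finset.mem_Ici]
    rw [← Fin.rev_rev i, Fin.rev_le_rev]
    exact hj
  · intro j hj
    simp only [Finset.mem_Ici] at hj
    simp only [Finset.mem_Iic]
    rw [← Fin.rev_rev i, Fin.rev_le_rev] at *
    simpa using hj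
  · intro j _; exact Fin.rev_rev j
  · intro j _; exact Fin.rev_rev j
  · intro j _; rfl

lemma sum_Ici_succ {n : ℕ} (i : Fin n) (f : Fin (n + 1) → ℂ) :
    ∑ j ∈ Finset.Ici i.succ, f j = ∑ j ∈ Finset.Ici i, f j.succ := by
  have himg : Finset.Ici i.succ = (Finset.Ici i).image Fin.succ := by
    ext k
    simp only [Finset.mem_image, Finset.mem_Ici]
    constructor
    · intro hk
      have hk0 : k ≠ 0 := by
        intro h
        rw [h] at hk
        exact (Fin.succ_ne_zero i) (le_antisymm (Fin.zero_le _) hk).symm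
      obtain ⟨j, rfl⟩ := Fin.exists_succ_eq.mpr hk0
      exact ⟨j, Fin.succ_le_succ_iff.mp hk, rfl⟩
    · rintro ⟨j, hj, rfl⟩; exact Fin.succ_le_succ_iff.mpr hj
  rw [himg, Finset.sum_image (fun x _ y _ h => Fin.succ_injective _ h)]

lemma eikonal_aux (ℓ : ℕ) : ∀ (a b : Fin ℓ → ℂ),
    (∀ (τ : Equiv.Perm (Fin ℓ)) (i : Fin ℓ), (∑ j ∈ Finset.Ici i, b (τ j)) ≠ 0) →
    ∑ τ : Equiv.Perm (Fin ℓ), ∏ i, a (τ i) / (∑ j ∈ Finset.Ici i, b (τ j)) =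
      ∏ i, a i / b i := by
  induction ℓ with
  | zero => intro a b _; simp
  | succ n IH =>
    intro a b hb
    set S : ℂ := ∑ x, b x with hS
    have hIci0 : Finset.Ici (0 : Fin (n + 1)) = Finset.univ := by
      ext j; simp [Fin.zero_le]
    have hIciLast : Finset.Ici (Fin.last n) = {Fin.last n} := by
      ext j; simp [Fin.last_le_iff]
    have hSne : S ≠ 0 := by
      have := hb 1 0
      rwa [hIci0] at this
      -- sum over univ of b (1 j) = S
    have hbp : ∀ p : Fin (n + 1), b p ≠ 0 := by
      intro p
      have := hb (Equiv.swap (Fin.last n) p) (Fin.last n)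
      rwa [hIciLast, Finset.sum_singleton, Equiv.swap_apply_left] at this
    set P : ℂ := ∏ i, a i / b i with hP
    -- reindex the sum over permutations
    rw [← Equiv.sum_comp (Equiv.Perm.decomposeFin.symm)
      (fun τ => ∏ i, a (τ i) / (∑ j ∈ Finset.Ici i, b (τ j))), Fintype.sum_prod_type]
    have hterm : ∀ (p : Fin (n + 1)) (π : Equiv.Perm (Fin n)),
        (∏ i, a (Equiv.Perm.decomposeFin.symm (p, π) i) /
          (∑ j ∈ Finset.Ici i, b (Equiv.Perm.decomposeFin.symm (p, π) j))) =
        (a p / S) * ∏ i : Fin n, a (Equiv.swap 0 p (π i).succ) /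
          (∑ j ∈ Finset.Ici i, b (Equiv.swap 0 p (π j).succ)) := by
      intro p π
      rw [Fin.prod_univ_succ]
      congr 1
      · rw [Equiv.Perm.decomposeFin_symm_apply_zero, hIci0,
          Equiv.sum_comp (Equiv.Perm.decomposeFin.symm (p, π)) b]
      · apply Finset.prod_congr rfl
        intro i _
        rw [sum_Ici_succ]
        simp only [Equiv.Perm.decomposeFin_symm_apply_succ]
    simp only [hterm]
    -- inner sums via IH
    have hinner : ∀ p : Fin (n + 1),
        ∑ π : Equiv.Perm (Fin n), ∏ i : Fin n, a (Equiv.swap 0 p (π i).succ) /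
          (∑ j ∈ Finset.Ici i, b (Equiv.swap 0 p (π j).succ)) =
        ∏ i : Fin n, a (Equiv.swap 0 p i.succ) / b (Equiv.swap 0 p i.succ) := by
      intro p
      apply IH (fun i => a (Equiv.swap 0 p i.succ)) (fun i => b (Equiv.swap 0 p i.succ))
      intro π i
      have := hb (Equiv.Perm.decomposeFin.symm (p, π)) i.succ
      rw [sum_Ici_succ] at this
      simpa only [Equiv.Perm.decomposeFin_symm_apply_succ] using this
    simp only [← Finset.mul_sum, hinner]
    -- key pointwise identity
    have hkey : ∀ p : Fin (n + 1),
        a p * ∏ i : Fin n, a (Equiv.swap 0 p i.succ) / b (Equiv.swap 0 p i.succ) = b p * P := by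
      intro p
      have h1 : ∏ i, a (Equiv.swap 0 p i) / b (Equiv.swap 0 p i) = P :=
        Equiv.prod_comp (Equiv.swap 0 p) (fun i => a i / b i)
      rw [Fin.prod_univ_succ, Equiv.swap_apply_left] at h1
      rw [← h1]
      field_simp
      exact (mul_div_cancel_right₀ _ (hbp p)).symm
    calc ∑ p, a p / S * ∏ i : Fin n, a (Equiv.swap 0 p i.succ) / b (Equiv.swap 0 p i.succ)
        = ∑ p, b p * P / S := by
          apply Finset.sum_congr rfl
          intro p _
          rw [div_mul_eq_mul_div, hkey p]
      _ = P := by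
          rw [← Finset.sum_div, ← Finset.sum_mul, ← hS, mul_comm, mul_div_assoc,
            div_self hSne, mul_one]

/-- Eikonal identity:
∑_{σ ∈ S_ℓ} ∏_{i=1}^{ℓ} a_{σ(i)} / (b_{σ(1)}+⋯+b_{σ(i)}) = ∏_{i=1}^{ℓ} a_i/b_i,
assuming all the partial sums b_{σ(1)}+⋯+b_{σ(i)} are nonzero. -/
theorem stmt_3 (ℓ : ℕ) (a b : Fin ℓ → ℂ)
    (hb : ∀ (σ : Equiv.Perm (Fin ℓ)) (i : Fin ℓ), (∑ j ∈ Finset.Iic i, b (σ j)) ≠ 0) :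
    ∑ σ : Equiv.Perm (Fin ℓ), ∏ i, a (σ i) / (∑ j ∈ Finset.Iic i, b (σ j)) =
      ∏ i, a i / b i := by
  have hyp : ∀ (τ : Equiv.Perm (Fin ℓ)) (i : Fin ℓ), (∑ j ∈ Finset.Ici i, b (τ j)) ≠ 0 := by
    intro τ i
    rw [← sum_Iic_rev i (fun j => b (τ j))]
    have := hb (τ * Fin.revPerm) i.rev
    simpa using this
  rw [← eikonal_aux ℓ a b hyp]
  rw [← Equiv.sum_comp (Equiv.mulRight (Fin.revPerm : Equiv.Perm (Fin ℓ)))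
    (fun σ => ∏ i, a (σ i) / (∑ j ∈ Finset.Iic i, b (σ j)))]
  apply Finset.sum_congr rfl
  intro τ _
  rw [← Equiv.prod_comp (Fin.revPerm : Equiv.Perm (Fin ℓ))
    (fun i => a (τ i) / ∑ j ∈ Finset.Ici i, b (τ j))]
  apply Finset.prod_congr rfl
  intro i _
  simp only [Equiv.coe_mulRight, Equiv.Perm.mul_apply, Fin.revPerm_apply]
  congr 1
  rw [← sum_Iic_rev i.rev (fun j => b (τ j)), Fin.rev_rev]
end
end

section
/- Polarization product decomposition identity: for lightlike momenta p, q, k and same-helicity polarizations ε⁺_q, ε⁺_k (arbitrary reference vectors), ε⁺_q·ε⁺_k = (p·ε⁺_q)(q·ε⁺_k)/(p·q) + (k·ε⁺_q)(p·ε⁺_k)/(p·k) − (p·ε⁺_q)(p·ε⁺_k)(q·k)/((p·q)(p·k)). -/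
noncomputable section
open Matrix

/-- Square bracket [ab], the antisymmetric product of the conjugate (tilde) spinors. -/
def sqb (a b : Fin 2 → ℂ) : ℂ := star (a 0) * star (b 1) - star (a 1) * star (b 0)

/-- The 2×2 matrix p^{αα̇} = λ^α λ̃^{α̇} of a real lightlike momentum. -/
def dyad (v : Fin 2 → ℂ) : Matrix (Fin 2) (Fin 2) ℂ := Matrix.of fun i j => v i * star (v j)

/-- Minkowski inner product A·B of four-vectors in 2×2 matrix form,
via the polar form of the determinant: 2A·B = det(A+B) − det A − det B. -/
def mdot (A B : Matrix (Fin 2) (Fin 2) ℂ) : ℂ := ((A + B).det - A.det - B.det) / 2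

/-- Positive-helicity polarization ε⁺_q(r) = √2 r⟩[q/⟨rq⟩ in 2×2 matrix form. -/
def polP (q r : Fin 2 → ℂ) : Matrix (Fin 2) (Fin 2) ℂ :=
  Matrix.of fun i j => (Real.sqrt 2 : ℂ) * r i * star (q j) / sbr r q

/-- Negative-helicity polarization ε⁻_q(r) = √2 q⟩[r/[qr] in 2×2 matrix form. -/
def polM (q r : Fin 2 → ℂ) : Matrix (Fin 2) (Fin 2) ℂ :=
  Matrix.of fun i j => (Real.sqrt 2 : ℂ) * q i * star (r j) / sqb q r

lemma sqrt2_sq' : ((Real.sqrt 2 : ℝ) : ℂ) * ((Real.sqrt 2 : ℝ) : ℂ) = 2 := by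
  rw [← Complex.ofReal_mul, Real.mul_self_sqrt (by norm_num)]; norm_num

lemma mdot_rank1' (x y : ℂ) (a b c d : Fin 2 → ℂ) :
    mdot (Matrix.of fun i j => x * a i * star (b j)) (Matrix.of fun i j => y * c i * star (d j))
      = x * y * sbr a c * star (sbr b d) / 2 := by
  simp only [mdot, sbr, Matrix.det_fin_two, Matrix.add_apply, Matrix.of_apply,
    star_sub, star_mul']
  ring

lemma polP_eq' (q r : Fin 2 → ℂ) :
    polP q r = Matrix.of fun i j => ((Real.sqrt 2 : ℂ) / sbr r q) * r i * star (q j) := by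
  ext i j; simp only [polP, Matrix.of_apply]; ring

lemma dyad_eq' (v : Fin 2 → ℂ) :
    dyad v = Matrix.of fun i j => (1 : ℂ) * v i * star (v j) := by
  ext i j; simp only [dyad, Matrix.of_apply]; ring

lemma L_dd' (a b : Fin 2 → ℂ) :
    mdot (dyad a) (dyad b) = sbr a b * star (sbr a b) / 2 := by
  rw [dyad_eq' a, dyad_eq' b, mdot_rank1']; ring

lemma L_dp' (a q r : Fin 2 → ℂ) :
    mdot (dyad a) (polP q r) =
      (Real.sqrt 2 : ℂ) * (sbr a r * star (sbr a q)) / (2 * sbr r q) := by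
  rw [dyad_eq' a, polP_eq', mdot_rank1']; ring

lemma T0' (q rq k rk : Fin 2 → ℂ) :
    mdot (polP q rq) (polP k rk) =
      sbr rq rk * star (sbr q k) / (sbr rq q * sbr rk k) := by
  rw [polP_eq', polP_eq', mdot_rank1', div_mul_div_comm, sqrt2_sq']
  ring

lemma Tpair' (a q r a' q' r' : Fin 2 → ℂ) :
    mdot (dyad a) (polP q r) * mdot (dyad a') (polP q' r') =
      2 * ((sbr a r * star (sbr a q)) * (sbr a' r' * star (sbr a' q')))
        / ((2 * sbr r q) * (2 * sbr r' q')) := by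
  rw [L_dp', L_dp', div_mul_div_comm]
  congr 1
  linear_combination (sbr a r * star (sbr a q) * (sbr a' r' * star (sbr a' q'))) * sqrt2_sq'

lemma abstract_flat' (c1 c2 A B sA sB sQK prq qrk krq prk rqrk qk : ℂ)
    (hc1 : c1 ≠ 0) (hc2 : c2 ≠ 0) (hA : A ≠ 0) (hB : B ≠ 0)
    (hsA : sA ≠ 0) (hsB : sB ≠ 0)
    (key : rqrk * (A * B) = prq * qrk * B - krq * prk * A - prq * prk * qk) :
    rqrk * sQK / (c1 * c2) =
      prq * sA * qrk * sQK / (c1 * c2 * A * sA)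
      + krq * (-sQK) * prk * sB / (c1 * c2 * B * sB)
      - prq * sA * prk * sB * (qk * sQK) / (c1 * c2 * A * sA * B * sB) := by
  have hd1 : c1 * c2 * A * sA ≠ 0 := by simp [hc1, hc2, hA, hsA]
  have hd2 : c1 * c2 * B * sB ≠ 0 := by simp [hc1, hc2, hB, hsB]
  have hd3 : c1 * c2 * A * sA * B * sB ≠ 0 := by simp [hc1, hc2, hA, hsA, hB, hsB]
  rw [div_add_div _ _ hd1 hd2, div_sub_div _ _ (mul_ne_zero hd1 hd2) hd3,
    div_eq_div_iff (mul_ne_zero hc1 hc2) (mul_ne_zero (mul_ne_zero hd1 hd2) hd3)]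
  linear_combination (c1^3 * c2^3 * A * B * sA^2 * sB^2 * sQK) * key

lemma abstract' (c1 c2 A B sA sB sQK sKQ prq qrk krq prk rqrk qk : ℂ)
    (hc1 : c1 ≠ 0) (hc2 : c2 ≠ 0) (hA : A ≠ 0) (hB : B ≠ 0)
    (hsA : sA ≠ 0) (hsB : sB ≠ 0) (hK : sKQ = -sQK)
    (key : rqrk * (A * B) = prq * qrk * B - krq * prk * A - prq * prk * qk) :
    rqrk * sQK / (c1 * c2) =
      2 * ((prq * sA) * (qrk * sQK)) / ((2 * c1) * (2 * c2)) / (A * sA / 2)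
      + 2 * ((krq * sKQ) * (prk * sB)) / ((2 * c1) * (2 * c2)) / (B * sB / 2)
      - 2 * ((prq * sA) * (prk * sB)) / ((2 * c1) * (2 * c2)) * (qk * sQK / 2)
          / ((A * sA / 2) * (B * sB / 2)) := by
  subst hK
  linear_combination abstract_flat' c1 c2 A B sA sB sQK prq qrk krq prk rqrk qk
    hc1 hc2 hA hB hsA hsB key

lemma schouten' (p q k rq rk : Fin 2 → ℂ) :
    sbr rq rk * (sbr p q * sbr p k) =
      sbr p rq * sbr q rk * sbr p k - sbr k rq * sbr p rk * sbr p q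
        - sbr p rq * sbr p rk * sbr q k := by
  simp only [sbr]; ring

lemma star_sbr_swap' (a b : Fin 2 → ℂ) : star (sbr a b) = - star (sbr b a) := by
  simp only [sbr, star_sub, star_mul']; ring

/-- Same-helicity polarization product decomposition:
ε⁺_q·ε⁺_k = (p·ε⁺_q)(q·ε⁺_k)/(p·q) + (k·ε⁺_q)(p·ε⁺_k)/(p·k)
            − (p·ε⁺_q)(p·ε⁺_k)(q·k)/((p·q)(p·k)). -/
theorem stmt_13 (p q k rq rk : Fin 2 → ℂ)
    (h1 : sbr rq q ≠ 0) (h2 : sbr rk k ≠ 0)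
    (hpq : sbr p q ≠ 0) (hpk : sbr p k ≠ 0) :
    mdot (polP q rq) (polP k rk) =
      mdot (dyad p) (polP q rq) * mdot (dyad q) (polP k rk) / mdot (dyad p) (dyad q)
      + mdot (dyad k) (polP q rq) * mdot (dyad p) (polP k rk) / mdot (dyad p) (dyad k)
      - mdot (dyad p) (polP q rq) * mdot (dyad p) (polP k rk) * mdot (dyad q) (dyad k)
          / (mdot (dyad p) (dyad q) * mdot (dyad p) (dyad k)) := by
  have hpq' : star (sbr p q) ≠ 0 := star_ne_zero.mpr hpq
  have hpk' : star (sbr p k) ≠ 0 := star_ne_zero.mpr hpk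
  rw [T0', Tpair', Tpair', Tpair', L_dd', L_dd', L_dd']
  exact abstract' _ _ _ _ _ _ _ _ _ _ _ _ _ _ h1 h2 hpq hpk hpq' hpk'
    (star_sbr_swap' k q) (schouten' p q k rq rk)
end
end
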